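/- arXiv:2105.07055 — 4 statements merged into one kernel-verified Lean document; each statement's English description precedes it below -/
import Mathlib

section
/- Let X and Y be independent Gamma(m, m) random variables with integer shape parameter m ≥ 1, and let a, b > 0 and I ≥ 0 be constants. Then the CDF of T₁ = aX/(bY + I) is F(τ) = 1 − Σ_{i=0}^{m−1} Σ_{k=0}^{i} [(k+m−1)! / (k!(m−1)!(i−k)!)] · aᵐ(bτ)ᵏ/(a+bτ)^{m+k} · (mτI/a)^{i−k} · e^{−mτI/a} for τ ≥ 0. -/
open MeasureTheory ProbabilityTheory Real

open Set
open scoped ENNReal NNReal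

lemma gsum_deriv (r : ℝ) (n : ℕ) (hn : 1 ≤ n) (t : ℝ) :
    HasDerivAt (fun t => ∑ i ∈ Finset.range n, (r*t)^i * Real.exp (-(r*t)) / i.factorial)
      (-(r^n * t^(n-1) * Real.exp (-(r*t)) / (n-1).factorial)) t := by
  have hexp : HasDerivAt (fun t : ℝ => Real.exp (-(r*t))) (Real.exp (-(r*t)) * (-r)) t := by
    have h1 : HasDerivAt (fun t : ℝ => -(r*t)) (-r) t := by
      simpa using (hasDerivAt_id t).const_mul (-r)
    exact (Real.hasDerivAt_exp _).comp t h1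
  have hpow : ∀ i : ℕ, HasDerivAt (fun t : ℝ => (r*t)^i) ((i:ℝ) * (r*t)^(i-1) * r) t := by
    intro i
    have h1 : HasDerivAt (fun t : ℝ => r*t) r t := by
      simpa using (hasDerivAt_id t).const_mul r
    exact (hasDerivAt_pow i (r*t)).comp t h1
  have key : ∀ i : ℕ, HasDerivAt (fun t => (r*t)^i * Real.exp (-(r*t)) / i.factorial)
      (((i:ℝ) * (r*t)^(i-1) * r * Real.exp (-(r*t)) + (r*t)^i * (Real.exp (-(r*t)) * (-r)))
        / i.factorial) t := fun i => ((hpow i).mul hexp).div_const _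
  have hsum := HasDerivAt.sum (fun i _ => key i) (u := Finset.range n)
  convert hsum using 1
  · rfl
  · rfl
  · ext x; simp only [Finset.sum_apply]
  -- now the algebraic identity on the derivative values
  set e := Real.exp (-(r*t)) with he
  have hsplit : ∀ i ∈ Finset.range n,
      ((i:ℝ) * (r*t)^(i-1) * r * e + (r*t)^i * (e * (-r))) / i.factorial
        = ((i:ℝ) * (r*t)^(i-1) * r * e / i.factorial) - ((r*t)^i * r * e / i.factorial) := by
    intro i _; ring
  rw [Finset.sum_congr rfl hsplit, Finset.sum_sub_distrib]
  obtain ⟨n', rfl⟩ : ∃ n', n = n' + 1 := ⟨n - 1, (Nat.succ_pred_eq_of_pos hn).symm⟩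
  rw [Finset.sum_range_succ' (fun i => (i:ℝ) * (r*t)^(i-1) * r * e / i.factorial),
    Finset.sum_range_succ (fun i => (r*t)^i * r * e / i.factorial)]
  have hv : ∀ i : ℕ, ((i:ℕ)+1 : ℝ) * (r*t)^((i+1)-1) * r * e / (i+1).factorial
      = (r*t)^i * r * e / i.factorial := by
    intro i
    rw [Nat.add_sub_cancel, Nat.factorial_succ]
    push_cast
    have h1 : ((i:ℝ)+1) ≠ 0 := by positivity
    field_simp
  simp only [Nat.cast_add, Nat.cast_one] at hv ⊢
  rw [Finset.sum_congr rfl (fun i _ => hv i)]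
  simp only [Nat.cast_zero, zero_mul, zero_div, add_zero, Nat.add_sub_cancel]
  rw [mul_pow]
  ring

lemma cdf_integral (r : ℝ) (n : ℕ) (hn : 1 ≤ n) (t : ℝ) :
    ∫ x in (0:ℝ)..t, r^n * x^(n-1) * Real.exp (-(r*x)) / (n-1).factorial
      = 1 - ∑ i ∈ Finset.range n, (r*t)^i * Real.exp (-(r*t)) / i.factorial := by
  have hd : ∀ x ∈ Set.uIcc 0 t,
      HasDerivAt (fun t => 1 - ∑ i ∈ Finset.range n, (r*t)^i * Real.exp (-(r*t)) / i.factorial)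
        (r^n * x^(n-1) * Real.exp (-(r*x)) / (n-1).factorial) x := by
    intro x _
    simpa using (gsum_deriv r n hn x).const_sub 1
  have hint : IntervalIntegrable
      (fun x => r^n * x^(n-1) * Real.exp (-(r*x)) / (n-1).factorial) volume 0 t :=
    Continuous.intervalIntegrable (by fun_prop) 0 t
  rw [intervalIntegral.integral_eq_sub_of_hasDerivAt hd hint]
  have hG0 : ∑ i ∈ Finset.range n, (r*(0:ℝ))^i * Real.exp (-(r*0)) / i.factorial = 1 := by
    obtain ⟨n', rfl⟩ : ∃ n', n = n' + 1 := ⟨n - 1, (Nat.succ_pred_eq_of_pos hn).symm⟩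
    rw [Finset.sum_range_succ']
    simp
  rw [hG0]
  ring

open ProbabilityTheory in
lemma pdf_eq (n : ℕ) (hn : 1 ≤ n) (r : ℝ) {x : ℝ} (hx : 0 ≤ x) :
    gammaPDF (n:ℝ) r x
      = ENNReal.ofReal (r^n * x^(n-1) * Real.exp (-(r*x)) / (n-1).factorial) := by
  rw [gammaPDF_of_nonneg hx]
  congr 1
  have h1 : ((n:ℝ)) = (((n-1:ℕ)+1 : ℕ) : ℝ) := by
    congr 1; omega
  have hg : Real.Gamma ((n:ℝ)) = (n-1).factorial := by
    rw [h1]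
    push_cast
    exact Real.Gamma_nat_eq_factorial (n-1)
  have hx1 : x ^ ((n:ℝ)-1) = x ^ (n-1 : ℕ) := by
    have : ((n:ℝ)) - 1 = ((n-1 : ℕ) : ℝ) := by
      rw [Nat.cast_sub hn]; norm_num
    rw [this, Real.rpow_natCast]
  have hr1 : r ^ ((n:ℝ)) = r ^ n := by
    rw [Real.rpow_natCast]
  rw [hg, hx1, hr1]
  ring

open ProbabilityTheory in
lemma gammaMeasure_Iic (n : ℕ) (hn : 1 ≤ n) (r : ℝ) (hr : 0 < r) (t : ℝ) (ht : 0 ≤ t) :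
    gammaMeasure (n:ℝ) r (Set.Iic t)
      = ENNReal.ofReal
          (1 - ∑ i ∈ Finset.range n, (r*t)^i * Real.exp (-(r*t)) / i.factorial) := by
  rw [gammaMeasure, withDensity_apply _ measurableSet_Iic,
    lintegral_Iic_eq_lintegral_Iio_add_Icc _ ht, lintegral_gammaPDF_of_nonpos le_rfl, zero_add]
  have hcong : ∫⁻ x in Icc 0 t, gammaPDF (n:ℝ) r x
      = ∫⁻ x in Icc 0 t,
          ENNReal.ofReal (r^n * x^(n-1) * Real.exp (-(r*x)) / (n-1).factorial) := by
    refine setLIntegral_congr_fun measurableSet_Icc (fun x hx => ?_)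
    exact pdf_eq n hn r hx.1
  rw [hcong]
  have hint : IntegrableOn (fun x => r^n * x^(n-1) * Real.exp (-(r*x)) / (n-1).factorial)
      (Icc 0 t) volume := Continuous.integrableOn_Icc (by fun_prop)
  rw [← ofReal_integral_eq_lintegral_ofReal hint
    ((ae_restrict_iff' measurableSet_Icc).mpr (ae_of_all _ fun x hx => by
      have := hx.1; positivity))]
  congr 1
  rw [← cdf_integral r n hn t, intervalIntegral.integral_of_le ht,
    ← integral_Icc_eq_integral_Ioc]

lemma sum_nonneg_aux (n : ℕ) (r t : ℝ) (hrt : 0 ≤ r * t) :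
    0 ≤ ∑ i ∈ Finset.range n, (r*t)^i * Real.exp (-(r*t)) / i.factorial :=
  Finset.sum_nonneg fun i _ => by positivity

lemma sum_le_one_aux (n : ℕ) (hn : 1 ≤ n) (r : ℝ) (hr : 0 < r) (t : ℝ) (ht : 0 ≤ t) :
    ∑ i ∈ Finset.range n, (r*t)^i * Real.exp (-(r*t)) / i.factorial ≤ 1 := by
  have h := cdf_integral r n hn t
  have h2 : 0 ≤ ∫ x in (0:ℝ)..t, r^n * x^(n-1) * Real.exp (-(r*x)) / (n-1).factorial :=
    intervalIntegral.integral_nonneg ht (fun x hx => by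
      have := hx.1; positivity)
  linarith

open ProbabilityTheory in
lemma gammaMeasure_Ioi (n : ℕ) (hn : 1 ≤ n) (r : ℝ) (hr : 0 < r) (t : ℝ) (ht : 0 ≤ t) :
    gammaMeasure (n:ℝ) r (Set.Ioi t)
      = ENNReal.ofReal
          (∑ i ∈ Finset.range n, (r*t)^i * Real.exp (-(r*t)) / i.factorial) := by
  have hprob : IsProbabilityMeasure (gammaMeasure (n:ℝ) r) :=
    isProbabilityMeasure_gammaMeasure (by exact_mod_cast Nat.pos_of_ne_zero (by omega)) hr
  have hc : Set.Ioi t = (Set.Iic t)ᶜ := by simp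
  rw [hc, measure_compl measurableSet_Iic (measure_ne_top _ _), measure_univ,
    gammaMeasure_Iic n hn r hr t ht]
  have h1 : 0 ≤ 1 - ∑ i ∈ Finset.range n, (r*t)^i * Real.exp (-(r*t)) / i.factorial := by
    have := sum_le_one_aux n hn r hr t ht; linarith
  rw [← ENNReal.ofReal_one, ← ENNReal.ofReal_sub _ h1]
  norm_num

lemma integrableOn_pow_exp (j : ℕ) (s : ℝ) (hs : 0 < s) :
    IntegrableOn (fun y : ℝ => y^j * Real.exp (-(s*y))) (Set.Ioi 0) volume := by
  have h0 : IntegrableOn (fun x : ℝ => Real.exp (-x) * x ^ ((j:ℝ))) (Set.Ioi 0) volume := by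
    have := Real.GammaIntegral_convergent (s := (j:ℝ)+1) (by positivity)
    simpa using this
  have h1 : IntegrableOn (fun y : ℝ => Real.exp (-(s*y)) * (s*y) ^ ((j:ℝ)))
      (Set.Ioi 0) volume := by
    rw [integrableOn_Ioi_comp_mul_left_iff
      (fun x : ℝ => Real.exp (-x) * x ^ ((j:ℝ))) 0 hs, mul_zero]
    exact h0
  have h3 := h1.const_mul ((1/s)^j)
  refine IntegrableOn.congr_fun h3 (fun y hy => ?_) measurableSet_Ioi
  rw [Real.rpow_natCast, mul_pow]
  field_simp
  rw [← mul_pow, one_div_mul_cancel hs.ne', one_pow, one_mul]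

lemma lintegral_pow_exp (j : ℕ) (s : ℝ) (hs : 0 < s) :
    ∫⁻ y in Set.Ioi (0:ℝ), ENNReal.ofReal (y^j * Real.exp (-(s*y)))
      = ENNReal.ofReal (j.factorial / s^(j+1)) := by
  rw [← ofReal_integral_eq_lintegral_ofReal (integrableOn_pow_exp j s hs)
    ((ae_restrict_iff' measurableSet_Ioi).mpr (ae_of_all _ fun y hy => by
      have : (0:ℝ) < y := hy; positivity))]
  congr 1
  have key := Real.integral_rpow_mul_exp_neg_mul_Ioi (a := (j:ℝ)+1) (by positivity) hs
  simp only [add_sub_cancel_right] at key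
  have hcong : ∫ y in Set.Ioi (0:ℝ), y ^ j * Real.exp (-(s*y))
      = ∫ y in Set.Ioi (0:ℝ), y ^ ((j:ℝ)) * Real.exp (-(s*y)) := by
    refine setIntegral_congr_fun measurableSet_Ioi (fun y hy => ?_)
    rw [Real.rpow_natCast]
  rw [hcong, key]
  have hg : Real.Gamma ((j:ℝ)+1) = j.factorial := by
    exact_mod_cast Real.Gamma_nat_eq_factorial j
  have hp : (1/s) ^ ((j:ℝ)+1) = (1/s)^(j+1) := by
    rw [show ((j:ℝ)+1) = ((j+1 : ℕ) : ℝ) by push_cast; ring, Real.rpow_natCast]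
  rw [hg, hp, one_div, inv_pow]
  field_simp

open ProbabilityTheory in
lemma lemC (n : ℕ) (hn : 1 ≤ n) (r c d : ℝ) (hr : 0 < r) (hc : 0 ≤ c) (hd : 0 ≤ d) (i : ℕ) :
    ∫⁻ y, gammaPDF (n:ℝ) r y
        * ENNReal.ofReal ((c*y+d)^i * Real.exp (-(c*y+d)) / i.factorial)
      = ENNReal.ofReal (∑ k ∈ Finset.range (i+1),
          ((n-1+k).factorial : ℝ) / (k.factorial * (n-1).factorial * (i-k).factorial)
            * c^k * d^(i-k) * Real.exp (-d) * r^n / (r+c)^(n+k)) := by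
  set f : ℝ → ℝ≥0∞ := fun y => gammaPDF (n:ℝ) r y
    * ENNReal.ofReal ((c*y+d)^i * Real.exp (-(c*y+d)) / i.factorial) with hf
  set K : ℕ → ℝ := fun k =>
    (i.choose k : ℝ) * c^k * d^(i-k) * Real.exp (-d) * r^n
      / ((n-1).factorial * i.factorial) with hK
  have hKnn : ∀ k, 0 ≤ K k := fun k => by rw [hK]; positivity
  -- restrict to Ioi 0
  have hsplit : ∫⁻ y, f y = ∫⁻ y in Set.Ioi 0, f y := by
    rw [← lintegral_add_compl (μ := volume) f (measurableSet_Iio (a := (0:ℝ)))]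
    have h0 : ∫⁻ y in Set.Iio (0:ℝ), f y = 0 := by
      have : ∫⁻ y in Set.Iio (0:ℝ), f y = ∫⁻ _ in Set.Iio (0:ℝ), (0:ℝ≥0∞) := by
        refine setLIntegral_congr_fun measurableSet_Iio (fun y hy => ?_)
        rw [hf]; simp only
        rw [gammaPDF_of_neg hy, zero_mul]
      rw [this, lintegral_const, zero_mul]
    rw [h0, zero_add, Set.compl_Iio, MeasureTheory.restrict_Ioi_eq_restrict_Ici]
  -- pointwise identity on Ioi 0
  have hpt : ∀ y ∈ Set.Ioi (0:ℝ), f y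
      = ∑ k ∈ Finset.range (i+1),
          ENNReal.ofReal (K k) * ENNReal.ofReal (y^(n-1+k) * Real.exp (-((r+c)*y))) := by
    intro y hy
    have hy' : (0:ℝ) < y := hy
    rw [hf]; simp only
    rw [pdf_eq n hn r hy'.le, ← ENNReal.ofReal_mul (by positivity)]
    have hreal : r^n * y^(n-1) * Real.exp (-(r*y)) / (n-1).factorial
          * ((c*y+d)^i * Real.exp (-(c*y+d)) / i.factorial)
        = ∑ k ∈ Finset.range (i+1), K k * (y^(n-1+k) * Real.exp (-((r+c)*y))) := by
      rw [add_pow, Finset.sum_mul, Finset.sum_div, Finset.mul_sum]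
      refine Finset.sum_congr rfl fun k hk => ?_
      rw [hK]; simp only
      rw [mul_pow, pow_add,
        show -(c*y+d) = -(c*y) + -d by ring, Real.exp_add,
        show -((r+c)*y) = -(r*y) + -(c*y) by ring, Real.exp_add]
      field_simp
    rw [hreal, ENNReal.ofReal_sum_of_nonneg (fun k _ => by
      have := hKnn k; positivity)]
    refine Finset.sum_congr rfl fun k hk => ?_
    rw [ENNReal.ofReal_mul (hKnn k)]
  rw [hsplit, setLIntegral_congr_fun measurableSet_Ioi hpt]
  rw [lintegral_finset_sum _ (fun k _ => by
    apply Measurable.const_mul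
    apply Measurable.ennreal_ofReal
    fun_prop)]
  have hterm : ∀ k ∈ Finset.range (i+1),
      ∫⁻ y in Set.Ioi (0:ℝ),
          ENNReal.ofReal (K k) * ENNReal.ofReal (y^(n-1+k) * Real.exp (-((r+c)*y)))
        = ENNReal.ofReal (K k * ((n-1+k).factorial / (r+c)^(n+k))) := by
    intro k hk
    rw [lintegral_const_mul _ (by apply Measurable.ennreal_ofReal; fun_prop),
      lintegral_pow_exp (n-1+k) (r+c) (by linarith),
      show n-1+k+1 = n+k from by omega, ← ENNReal.ofReal_mul (hKnn k)]
  rw [Finset.sum_congr rfl hterm, ← ENNReal.ofReal_sum_of_nonneg (fun k _ => by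
    have := hKnn k
    have h2 : (0:ℝ) < (r+c)^(n+k) := by positivity
    positivity)]
  congr 1
  refine Finset.sum_congr rfl fun k hk => ?_
  rw [hK]; simp only
  have hkk : k ≤ i := by
    simp only [Finset.mem_range] at hk; omega
  have hch : (i.choose k : ℝ) * k.factorial * (i-k).factorial = i.factorial := by
    exact_mod_cast Nat.choose_mul_factorial_mul_factorial hkk
  have h2 : (0:ℝ) < (r+c)^(n+k) := by positivity
  have hfacs : (0:ℝ) < (k.factorial : ℝ) := by exact_mod_cast k.factorial_pos
  have hfaci : (0:ℝ) < (i.factorial : ℝ) := by exact_mod_cast i.factorial_pos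
  have hfacn : (0:ℝ) < ((n-1).factorial : ℝ) := by exact_mod_cast (n-1).factorial_pos
  have hfacik : (0:ℝ) < ((i-k).factorial : ℝ) := by exact_mod_cast (i-k).factorial_pos
  have hchpos : (0:ℝ) < (i.choose k : ℝ) := by
    exact_mod_cast Nat.choose_pos hkk
  rw [← hch]
  field_simp

lemma sum_at_zero (n : ℕ) (hn : 1 ≤ n) (r : ℝ) :
    ∑ i ∈ Finset.range n, (r*0)^i * Real.exp (-(r*0)) / i.factorial = 1 := by
  obtain ⟨n', rfl⟩ : ∃ n', n = n' + 1 := ⟨n - 1, (Nat.succ_pred_eq_of_pos hn).symm⟩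
  rw [Finset.sum_range_succ']
  simp


open ProbabilityTheory in
/-- CDF of T₁ = aX/(bY+I) for independent Gamma(m,m) X, Y. -/
theorem gamma_T1_cdf
    {Ω : Type*} [MeasurableSpace Ω] (P : Measure Ω) [IsProbabilityMeasure P]
    (X Y : Ω → ℝ) (m : ℕ) (hm : 1 ≤ m) (a b I τ : ℝ)
    (ha : 0 < a) (hb : 0 < b) (hI : 0 ≤ I) (hτ : 0 ≤ τ)
    (hXY : IndepFun X Y P)
    (hX : Measure.map X P = gammaMeasure (m : ℝ) (m : ℝ))
    (hY : Measure.map Y P = gammaMeasure (m : ℝ) (m : ℝ)) :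
    (P {ω | a * X ω / (b * Y ω + I) ≤ τ}).toReal =
      1 - ∑ i ∈ Finset.range m, ∑ k ∈ Finset.range (i + 1),
        ((k + m - 1).factorial : ℝ) /
          (k.factorial * (m - 1).factorial * (i - k).factorial) *
        (a ^ m * (b * τ) ^ k / (a + b * τ) ^ (m + k)) *
        (m * τ * I / a) ^ (i - k) * Real.exp (-(m * τ * I / a)) := by
  have hm0 : (0:ℝ) < m := by exact_mod_cast Nat.lt_of_lt_of_le Nat.zero_lt_one hm
  set μ := gammaMeasure (m:ℝ) (m:ℝ) with hμ
  haveI hPμ : IsProbabilityMeasure μ := isProbabilityMeasure_gammaMeasure hm0 hm0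
  have hXm : AEMeasurable X P := by
    by_contra h
    rw [Measure.map_of_not_aemeasurable h] at hX
    have h1 := congrArg (fun ν : Measure ℝ => ν Set.univ) hX
    simp only [Measure.coe_zero, Pi.zero_apply] at h1
    rw [measure_univ] at h1
    exact zero_ne_one h1
  have hYm : AEMeasurable Y P := by
    by_contra h
    rw [Measure.map_of_not_aemeasurable h] at hY
    have h1 := congrArg (fun ν : Measure ℝ => ν Set.univ) hY
    simp only [Measure.coe_zero, Pi.zero_apply] at h1
    rw [measure_univ] at h1
    exact zero_ne_one h1
  have hmap : P.map (fun ω => (X ω, Y ω)) = μ.prod μ := by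
    rw [(indepFun_iff_map_prod_eq_prod_map_map hXm hYm).mp hXY, hX, hY]
  set S : Set (ℝ×ℝ) := {p | a * p.1 / (b * p.2 + I) ≤ τ} with hS
  have hSm : MeasurableSet S := by
    have hmeas : Measurable fun p : ℝ×ℝ => a * p.1 / (b * p.2 + I) := by fun_prop
    exact hmeas measurableSet_Iic
  have hPE : P {ω | a * X ω / (b * Y ω + I) ≤ τ} = (μ.prod μ) S := by
    rw [← hmap, Measure.map_apply_of_aemeasurable (hXm.prodMk hYm) hSm]
    rfl
  set c : ℝ := (m:ℝ) * τ * b / a with hc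
  set d : ℝ := (m:ℝ) * τ * I / a with hd
  have hc0 : 0 ≤ c := by positivity
  have hd0 : 0 ≤ d := by positivity
  -- a.e. positivity
  have hY0 : ∀ᵐ y ∂μ, 0 < y := by
    rw [ae_iff]
    have hset : {y : ℝ | ¬ 0 < y} = Set.Iic 0 := by ext y; simp
    rw [hset, hμ, gammaMeasure_Iic m hm (m:ℝ) hm0 0 le_rfl, sum_at_zero m hm]
    simp
  have hptY : ∀ᵐ y ∂μ, μ ((fun x => (x,y)) ⁻¹' Sᶜ)
      = ∑ i ∈ Finset.range m,
          ENNReal.ofReal ((c*y+d)^i * Real.exp (-(c*y+d)) / i.factorial) := by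
    filter_upwards [hY0] with y hy
    have hby : 0 < b * y + I := by positivity
    have hpre : (fun x => (x,y)) ⁻¹' Sᶜ = Set.Ioi ((b*y+I)*τ/a) := by
      ext x
      simp only [Set.mem_preimage, Set.mem_compl_iff, hS, Set.mem_setOf_eq, not_le,
        Set.mem_Ioi]
      rw [lt_div_iff₀ hby, div_lt_iff₀ ha]
      constructor <;> intro h <;> nlinarith
    rw [hpre, hμ, gammaMeasure_Ioi m hm _ hm0 _ (by positivity)]
    have harg : ∀ i ∈ Finset.range m,
        ((m:ℝ)*((b*y+I)*τ/a))^i * Real.exp (-((m:ℝ)*((b*y+I)*τ/a))) / i.factorial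
          = (c*y+d)^i * Real.exp (-(c*y+d)) / i.factorial := by
      intro i _
      have : (m:ℝ)*((b*y+I)*τ/a) = c*y+d := by
        rw [hc, hd]; field_simp
      rw [this]
    rw [Finset.sum_congr rfl harg,
      ENNReal.ofReal_sum_of_nonneg (fun i _ => by
        have hcyd : 0 ≤ c*y+d := by positivity
        positivity)]
  have hcompl : (μ.prod μ) Sᶜ
      = ∑ i ∈ Finset.range m,
          ENNReal.ofReal (∑ k ∈ Finset.range (i+1),
            ((m-1+k).factorial : ℝ) / (k.factorial * (m-1).factorial * (i-k).factorial)
              * c^k * d^(i-k) * Real.exp (-d) * (m:ℝ)^m / ((m:ℝ)+c)^(m+k)) := by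
    rw [Measure.prod_apply_symm hSm.compl, lintegral_congr_ae hptY,
      lintegral_finset_sum _ (fun i _ => by
        apply Measurable.ennreal_ofReal; fun_prop)]
    refine Finset.sum_congr rfl fun i _ => ?_
    have hpdfm : Measurable (gammaPDF (m:ℝ) (m:ℝ)) :=
      (measurable_gammaPDFReal _ _).ennreal_ofReal
    have hgm : Measurable fun y : ℝ =>
        ENNReal.ofReal ((c*y+d)^i * Real.exp (-(c*y+d)) / i.factorial) := by
      apply Measurable.ennreal_ofReal; fun_prop
    rw [hμ, gammaMeasure, lintegral_withDensity_eq_lintegral_mul _ hpdfm hgm]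
    simpa [Pi.mul_apply] using lemC m hm (m:ℝ) c d hm0 hc0 hd0 i
  -- assemble
  have hSval : (μ.prod μ) S = 1 - (μ.prod μ) Sᶜ := by
    have h := prob_compl_eq_one_sub (μ := μ.prod μ) hSm.compl
    rwa [compl_compl] at h
  have hWnn : ∀ i, 0 ≤ ∑ k ∈ Finset.range (i+1),
      ((m-1+k).factorial : ℝ) / (k.factorial * (m-1).factorial * (i-k).factorial)
        * c^k * d^(i-k) * Real.exp (-d) * (m:ℝ)^m / ((m:ℝ)+c)^(m+k) := by
    intro i
    refine Finset.sum_nonneg fun k _ => ?_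
    have h2 : (0:ℝ) < ((m:ℝ)+c)^(m+k) := by positivity
    positivity
  rw [hPE, hSval, hcompl, ENNReal.toReal_sub_of_le (by
      rw [← hcompl]; exact prob_le_one) ENNReal.one_ne_top,
    ENNReal.toReal_one, ENNReal.toReal_sum (fun i _ => ENNReal.ofReal_ne_top)]
  congr 1
  refine Finset.sum_congr rfl fun i _ => ?_
  rw [ENNReal.toReal_ofReal (hWnn i)]
  refine Finset.sum_congr rfl fun k hk => ?_
  rw [show k + m - 1 = m - 1 + k from by omega]
  have habτ : (0:ℝ) < a + b*τ := by positivity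
  have hmc : (m:ℝ) + c = (m:ℝ)*(a+b*τ)/a := by
    rw [hc]; field_simp
  have hkey : c^k * (m:ℝ)^m / ((m:ℝ)+c)^(m+k) = a^m * (b*τ)^k / (a+b*τ)^(m+k) := by
    have e1 : ((m:ℝ)+c)^(m+k) = (m:ℝ)^(m+k) * (a+b*τ)^(m+k) / a^(m+k) := by
      rw [hmc, div_pow, mul_pow]
    have e2 : c^k = (m:ℝ)^k * (b*τ)^k / a^k := by
      rw [hc, ← mul_pow, ← div_pow]
      congr 1
      field_simp
    rw [e1, e2]
    simp only [pow_add]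
    have n1 : (a:ℝ)^k ≠ 0 := by positivity
    have n2 : (a:ℝ)^m ≠ 0 := by positivity
    have n3 : ((m:ℝ))^m ≠ 0 := by positivity
    have n4 : ((m:ℝ))^k ≠ 0 := by positivity
    have n5 : ((a+b*τ):ℝ)^(m+k) ≠ 0 := by positivity
    field_simp
  calc ((m-1+k).factorial : ℝ) / (k.factorial * (m-1).factorial * (i-k).factorial)
        * c^k * d^(i-k) * Real.exp (-d) * (m:ℝ)^m / ((m:ℝ)+c)^(m+k)
      = ((m-1+k).factorial : ℝ) / (k.factorial * (m-1).factorial * (i-k).factorial)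
        * (c^k * (m:ℝ)^m / ((m:ℝ)+c)^(m+k)) * d^(i-k) * Real.exp (-d) := by ring
    _ = _ := by rw [hkey]
end

section
/- Let X and Y be independent exponential random variables with mean 1, and let a, b > 0, I ≥ 0. For 0 ≤ τ < 1, the CDF of T₂ = max{aX, bY}/(min{aX, bY} + I) equals 1 − [a/(a+bτ)]e^{−τI/a} − [b/(b+aτ)]e^{−τI/b} + [ab(1+τ)(1−τ)/((a+bτ)(b+aτ))] e^{−(1/a + 1/b)·τI/(1−τ)}. -/
set_option maxHeartbeats 1000000

open MeasureTheory ProbabilityTheory Real Set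

lemma myInt {α : ℝ} (hα : 0 < α) (t : ℝ) :
    ∫ y in Ioi t, Real.exp (-(α * y)) = Real.exp (-(α * t)) / α := by
  have := MeasureTheory.integral_comp_mul_left_Ioi (fun x => Real.exp (-x)) t hα
  simp only [smul_eq_mul] at this
  rw [show (fun y => Real.exp (-(α*y))) = (fun y => (fun x => Real.exp (-x)) (α * y)) from rfl,
    this, integral_exp_neg_Ioi]
  ring


lemma expSurv {t : ℝ} (ht : 0 ≤ t) : expMeasure 1 (Ioi t) = ENNReal.ofReal (Real.exp (-t)) := by
  rw [expMeasure, gammaMeasure, withDensity_apply _ measurableSet_Ioi]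
  have h1 : ∀ x ∈ Ioi t, gammaPDF 1 1 x = ENNReal.ofReal (Real.exp (-x)) := by
    intro x hx
    rw [gammaPDF_of_nonneg (le_trans ht (le_of_lt hx))]
    norm_num
  rw [setLIntegral_congr_fun measurableSet_Ioi h1]
  rw [← ofReal_integral_eq_lintegral_ofReal]
  · rw [show (∫ x in Ioi t, Real.exp (-x)) = Real.exp (-t) from integral_exp_neg_Ioi t]
  · have h := exp_neg_integrableOn_Ioi t one_pos; simp at h; exact h
  · exact Filter.Eventually.of_forall fun x => (Real.exp_pos _).le


lemma expNullIic : expMeasure 1 (Iic 0) = 0 := by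
  have h0 : expMeasure 1 {(0:ℝ)} = 0 := by
    rw [expMeasure, gammaMeasure]
    exact (withDensity_absolutelyContinuous _ _) (volume_singleton)
  have hio : expMeasure 1 (Iio 0) = 0 := by
    rw [expMeasure, gammaMeasure, withDensity_apply _ measurableSet_Iio]
    exact lintegral_gammaPDF_of_nonpos le_rfl
  have hu : Iic (0:ℝ) = {(0:ℝ)} ∪ Iio 0 := by
    ext x; simp only [mem_Iic, mem_union, mem_singleton_iff, mem_Iio]
    constructor
    · intro h; rcases eq_or_lt_of_le h with h'|h'
      · exact Or.inl h'
      · exact Or.inr h'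
    · rintro (h|h) <;> [exact h.le; exact h.le]
  rw [hu, measure_union_null h0 hio]


lemma expIoo {l r : ℝ} (hl : 0 ≤ l) (hlr : l ≤ r) :
    expMeasure 1 (Ioo l r) = ENNReal.ofReal (Real.exp (-l) - Real.exp (-r)) := by
  have h0 : expMeasure 1 {r} = 0 := by
    rw [expMeasure, gammaMeasure]
    exact (withDensity_absolutelyContinuous _ _) (volume_singleton)
  have hIci : expMeasure 1 (Ici r) = ENNReal.ofReal (Real.exp (-r)) := by
    have hu : Ici r = {r} ∪ Ioi r := by
      ext x; simp only [mem_Ici, mem_union, mem_singleton_iff, mem_Ioi]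
      constructor
      · intro h; rcases eq_or_lt_of_le h with h'|h'
        · exact Or.inl h'.symm
        · exact Or.inr h'
      · rintro (h|h) <;> [exact h.ge; exact h.le]
    have hdisj0 : Disjoint {r} (Ioi r) :=
      Set.disjoint_left.2 (by rintro x rfl hx; exact lt_irrefl _ (mem_Ioi.1 hx))
    rw [hu, measure_union hdisj0 measurableSet_Ioi, h0, zero_add, expSurv (hl.trans hlr)]
  rcases eq_or_lt_of_le hlr with rfl|hlr'
  · simp
  have hsplit : Ioi l = Ioo l r ∪ Ici r := by
    ext x; simp only [mem_Ioi, mem_union, mem_Ioo, mem_Ici]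
    constructor
    · intro h; rcases lt_or_ge x r with h'|h'
      · exact Or.inl ⟨h, h'⟩
      · exact Or.inr h'
    · rintro (⟨h,_⟩|h); exacts [h, lt_of_lt_of_le hlr' h]
  have hdisj : Disjoint (Ioo l r) (Ici r) :=
    Set.disjoint_left.2 (fun x hx h3 => absurd h3 (not_le.2 hx.2))
  have hkey := measure_union (μ := expMeasure 1) hdisj measurableSet_Ici
  rw [← hsplit, expSurv hl, hIci] at hkey
  have hle : ENNReal.ofReal (Real.exp (-r)) ≤ ENNReal.ofReal (Real.exp (-l)) :=
    ENNReal.ofReal_le_ofReal (Real.exp_le_exp.2 (by linarith))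
  have : expMeasure 1 (Ioo l r) = ENNReal.ofReal (Real.exp (-l)) - ENNReal.ofReal (Real.exp (-r)) := by
    exact ENNReal.eq_sub_of_add_eq (by simp) hkey.symm
  rw [this, ENNReal.ofReal_sub _ (Real.exp_pos _).le]

lemma lintExp {s : ℝ} (hs : 0 ≤ s) {f : ℝ → ℝ} (hm : Measurable f)
    (hnn : ∀ y ∈ Ioi s, 0 ≤ f y)
    (hi : IntegrableOn (fun y => f y * Real.exp (-y)) (Ioi s)) :
    ∫⁻ y in Ioi s, ENNReal.ofReal (f y) ∂(expMeasure 1)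
      = ENNReal.ofReal (∫ y in Ioi s, f y * Real.exp (-y)) := by
  have hpdf : Measurable (gammaPDF 1 1) := (measurable_gammaPDFReal 1 1).ennreal_ofReal
  rw [expMeasure, gammaMeasure, restrict_withDensity measurableSet_Ioi,
    lintegral_withDensity_eq_lintegral_mul _ hpdf hm.ennreal_ofReal]
  have h1 : ∀ y ∈ Ioi s, gammaPDF 1 1 y * ENNReal.ofReal (f y)
      = ENNReal.ofReal (f y * Real.exp (-y)) := by
    intro y hy
    rw [gammaPDF_of_nonneg (hs.trans (le_of_lt hy))]
    have h2 : (1:ℝ) ^ (1:ℝ) / Real.Gamma 1 * y ^ ((1:ℝ)-1) * Real.exp (-(1*y)) = Real.exp (-y) := by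
      rw [Real.Gamma_one]; norm_num
    rw [h2, ← ENNReal.ofReal_mul (Real.exp_pos _).le, mul_comm]
  calc ∫⁻ y in Ioi s, (gammaPDF 1 1 * fun y => ENNReal.ofReal (f y)) y
      = ∫⁻ y in Ioi s, ENNReal.ofReal (f y * Real.exp (-y)) :=
        setLIntegral_congr_fun measurableSet_Ioi h1
    _ = ENNReal.ofReal (∫ y in Ioi s, f y * Real.exp (-y)) := by
        rw [← ofReal_integral_eq_lintegral_ofReal hi
          (ae_restrict_of_forall_mem measurableSet_Ioi
            (fun y hy => mul_nonneg (hnn y hy) (Real.exp_pos _).le))]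

lemma lintFull (g : ℝ → ENNReal) :
    ∫⁻ y, g y ∂(expMeasure 1) = ∫⁻ y in Ioi 0, g y ∂(expMeasure 1) := by
  rw [← lintegral_add_compl g measurableSet_Ioi (μ := expMeasure 1)]
  have : (Ioi (0:ℝ))ᶜ = Iic 0 := by ext x; simp
  rw [this, setLIntegral_measure_zero _ _ expNullIic, add_zero]


lemma PA {a b τ c : ℝ} (ha : 0 < a) (hb : 0 < b) (hτ : 0 ≤ τ) (hc : 0 ≤ c) :
    (expMeasure 1).prod (expMeasure 1) {p : ℝ × ℝ | τ * (b * p.2) + c < a * p.1}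
      = ENNReal.ofReal (a / (a + b * τ) * Real.exp (-(c / a))) := by
  haveI : IsProbabilityMeasure (expMeasure 1) := isProbabilityMeasure_expMeasure one_pos
  have hsm : MeasurableSet {p : ℝ × ℝ | τ * (b * p.2) + c < a * p.1} :=
    measurableSet_lt (by fun_prop) (by fun_prop)
  rw [Measure.prod_apply_symm hsm]
  have hslice : ∀ y : ℝ, (fun x => (x, y)) ⁻¹' {p : ℝ × ℝ | τ * (b * p.2) + c < a * p.1}
      = Ioi ((τ * (b * y) + c)/a) := by
    intro y; ext x
    simp only [mem_preimage, mem_setOf_eq, mem_Ioi]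
    rw [div_lt_iff₀ ha]
    constructor <;> (intro h; linarith)
  simp only [hslice]
  rw [lintFull, setLIntegral_congr_fun measurableSet_Ioi
    (fun y (hy : y ∈ Ioi 0) =>
      expSurv (by have h0 : (0:ℝ) < y := hy; positivity))]
  set α : ℝ := τ * b / a + 1 with hαdef
  have hα : 0 < α := by positivity
  have hfun : (fun y : ℝ => Real.exp (-((τ * (b * y) + c)/a)) * Real.exp (-y))
      = fun y => Real.exp (-(c/a)) * Real.exp (-(α * y)) := by
    funext y
    rw [← Real.exp_add, ← Real.exp_add]
    congr 1
    rw [hαdef]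
    field_simp
    ring
  have hInt : IntegrableOn (fun y : ℝ => Real.exp (-((τ * (b * y) + c)/a)) * Real.exp (-y)) (Ioi 0) := by
    apply IntegrableOn.congr_fun ?_ (fun y _ => (congrFun hfun y).symm) measurableSet_Ioi
    have h := ((exp_neg_integrableOn_Ioi 0 hα).const_mul (Real.exp (-(c/a)))); simp [neg_mul] at h; exact h
  rw [lintExp le_rfl (by fun_prop) (fun y _ => (Real.exp_pos _).le) hInt]
  congr 1
  rw [show (∫ y in Ioi 0, Real.exp (-((τ * (b * y) + c)/a)) * Real.exp (-y))
      = ∫ y in Ioi 0, Real.exp (-(c/a)) * Real.exp (-(α * y)) from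
      setIntegral_congr_fun measurableSet_Ioi (fun y _ => congrFun hfun y),
    MeasureTheory.integral_const_mul, myInt hα 0]
  have h1 : α = (a + b*τ)/a := by rw [hαdef]; field_simp; ring
  calc Real.exp (-(c/a)) * (Real.exp (-(α*0))/α) = Real.exp (-(c/a)) * (1/α) := by norm_num
    _ = Real.exp (-(c/a)) * (a/(a+b*τ)) := by rw [h1, one_div_div]
    _ = a/(a+b*τ) * Real.exp (-(c/a)) := mul_comm _ _

lemma PAB {a b τ k : ℝ} (ha : 0 < a) (hb : 0 < b) (hτ0 : 0 ≤ τ) (hτ1 : τ < 1) (hk : 0 ≤ k) :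
    (expMeasure 1).prod (expMeasure 1)
      {p : ℝ × ℝ | τ * (b * p.2) + k * (1 - τ) < a * p.1 ∧ τ * (a * p.1) + k * (1 - τ) < b * p.2}
      = ENNReal.ofReal (a * b * (1 + τ) * (1 - τ) / ((a + b * τ) * (b + a * τ))
          * Real.exp (-(k / a + k / b))) := by
  haveI : IsProbabilityMeasure (expMeasure 1) := isProbabilityMeasure_expMeasure one_pos
  set c : ℝ := k * (1 - τ) with hcdef
  have hc : 0 ≤ c := by nlinarith
  have hsm : MeasurableSet {p : ℝ × ℝ | τ * (b * p.2) + c < a * p.1 ∧ τ * (a * p.1) + c < b * p.2} := by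
    rw [Set.setOf_and]
    exact (measurableSet_lt (by fun_prop) (by fun_prop)).inter
      (measurableSet_lt (by fun_prop) (by fun_prop))
  rcases eq_or_lt_of_le hτ0 with rfl|hτ
  · -- τ = 0 case
    have hset : {p : ℝ × ℝ | 0 * (b * p.2) + c < a * p.1 ∧ 0 * (a * p.1) + c < b * p.2}
        = Ioi (k/a) ×ˢ Ioi (k/b) := by
      ext p
      simp only [mem_setOf_eq, mem_prod, mem_Ioi, zero_mul, zero_add, hcdef]
      rw [div_lt_iff₀ ha, div_lt_iff₀ hb]
      constructor <;> (rintro ⟨h1,h2⟩; constructor <;> nlinarith)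
    rw [hset, Measure.prod_prod, expSurv (by positivity), expSurv (by positivity),
      ← ENNReal.ofReal_mul (Real.exp_pos _).le, ← Real.exp_add]
    congr 1
    rw [show -(k/a) + -(k/b) = -(k/a + k/b) by ring]
    rw [show a * b * (1+0) * (1-0) / ((a + b*0)*(b+a*0)) = 1 by field_simp; ring]
    ring
  · -- τ > 0 case
    have hτa : 0 < τ * a := by positivity
    have hslice : ∀ y : ℝ, (fun x => (x, y)) ⁻¹'
        {p : ℝ × ℝ | τ * (b * p.2) + c < a * p.1 ∧ τ * (a * p.1) + c < b * p.2}
        = Ioo ((τ * (b * y) + c)/a) ((b * y - c)/(τ * a)) := by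
      intro y; ext x
      simp only [mem_preimage, mem_setOf_eq, mem_Ioo]
      rw [div_lt_iff₀ ha, lt_div_iff₀ hτa]
      constructor <;> (rintro ⟨h1,h2⟩; constructor <;> nlinarith)
    rw [Measure.prod_apply_symm hsm]
    simp only [hslice]
    have hind : ∀ y : ℝ, expMeasure 1 (Ioo ((τ * (b * y) + c)/a) ((b * y - c)/(τ * a)))
        = Set.indicator (Ioi (k/b)) (fun y => ENNReal.ofReal
            (Real.exp (-((τ * (b * y) + c)/a)) - Real.exp (-((b * y - c)/(τ * a))))) y := by
      intro y
      rcases le_or_gt y (k/b) with hy|hy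
      · have h1 : b * y ≤ k := by rw [mul_comm]; exact (le_div_iff₀ hb).1 hy
        have key : (τ*(b*y)+c)*(τ*a) - (b*y - c)*a = a*(1+τ)*(1-τ)*(k - b*y) := by
          rw [hcdef]; ring
        have h4 : 0 ≤ a*(1+τ)*(1-τ)*(k - b*y) :=
          mul_nonneg (by nlinarith) (by linarith)
        have hle : (b * y - c)/(τ * a) ≤ (τ * (b * y) + c)/a := by
          rw [div_le_div_iff₀ hτa ha]
          linarith
        rw [Set.indicator_of_notMem (by simpa using hy), Set.Ioo_eq_empty (not_lt.2 hle),
          measure_empty]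
      · rw [Set.indicator_of_mem (mem_Ioi.2 hy)]
        have hby : k < b * y := by rwa [div_lt_iff₀ hb, mul_comm] at hy
        have hy0 : 0 < y := lt_of_le_of_lt (by positivity) hy
        have key : (τ*(b*y)+c)*(τ*a) - (b*y - c)*a = a*(1+τ)*(1-τ)*(k - b*y) := by
          rw [hcdef]; ring
        have h4 : a*(1+τ)*(1-τ)*(k - b*y) ≤ 0 :=
          mul_nonpos_of_nonneg_of_nonpos (by nlinarith) (by linarith)
        apply expIoo (by positivity)
        rw [div_le_div_iff₀ ha hτa]
        linarith
    simp only [hind]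
    rw [lintegral_indicator measurableSet_Ioi]
    have hkb : (0:ℝ) ≤ k/b := by positivity
    set α₁ : ℝ := τ*b/a + 1 with hα₁def
    set α₂ : ℝ := b/(τ*a) + 1 with hα₂def
    have hα₁ : 0 < α₁ := by positivity
    have hα₂ : 0 < α₂ := by positivity
    have hfun : (fun y : ℝ => (Real.exp (-((τ*(b*y)+c)/a)) - Real.exp (-((b*y - c)/(τ*a)))) * Real.exp (-y))
        = fun y => Real.exp (-(c/a)) * Real.exp (-(α₁*y)) - Real.exp (c/(τ*a)) * Real.exp (-(α₂*y)) := by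
      funext y
      rw [sub_mul, ← Real.exp_add, ← Real.exp_add, ← Real.exp_add, ← Real.exp_add]
      congr 2
      · rw [hα₁def]; field_simp; ring
      · rw [hα₂def]; field_simp; ring
    have hnn : ∀ y ∈ Ioi (k/b), 0 ≤ Real.exp (-((τ*(b*y)+c)/a)) - Real.exp (-((b*y - c)/(τ*a))) := by
      intro y hy
      have hby : k < b * y := by rw [mem_Ioi, div_lt_iff₀ hb, mul_comm] at hy; exact hy
      have key : (τ*(b*y)+c)*(τ*a) - (b*y - c)*a = a*(1+τ)*(1-τ)*(k - b*y) := by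
        rw [hcdef]; ring
      have h4 : a*(1+τ)*(1-τ)*(k - b*y) ≤ 0 :=
        mul_nonpos_of_nonneg_of_nonpos (by nlinarith) (by linarith)
      apply sub_nonneg.2 (Real.exp_le_exp.2 (neg_le_neg ?_))
      rw [div_le_div_iff₀ ha hτa]
      linarith
    have hInt : IntegrableOn (fun y : ℝ => (Real.exp (-((τ*(b*y)+c)/a)) - Real.exp (-((b*y - c)/(τ*a)))) * Real.exp (-y)) (Ioi (k/b)) := by
      apply IntegrableOn.congr_fun ?_ (fun y _ => (congrFun hfun y).symm) measurableSet_Ioi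
      apply Integrable.sub
      · simpa [neg_mul] using ((exp_neg_integrableOn_Ioi (k/b) hα₁).const_mul (Real.exp (-(c/a))))
      · simpa [neg_mul] using ((exp_neg_integrableOn_Ioi (k/b) hα₂).const_mul (Real.exp (c/(τ*a))))
    rw [lintExp hkb (by fun_prop) hnn hInt]
    congr 1
    rw [show (∫ y in Ioi (k/b), (Real.exp (-((τ*(b*y)+c)/a)) - Real.exp (-((b*y - c)/(τ*a)))) * Real.exp (-y))
        = ∫ y in Ioi (k/b), (Real.exp (-(c/a)) * Real.exp (-(α₁*y)) - Real.exp (c/(τ*a)) * Real.exp (-(α₂*y))) from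
        setIntegral_congr_fun measurableSet_Ioi (fun y _ => congrFun hfun y)]
    rw [integral_sub
      (by simpa [neg_mul] using ((exp_neg_integrableOn_Ioi (k/b) hα₁).const_mul (Real.exp (-(c/a)))))
      (by simpa [neg_mul] using ((exp_neg_integrableOn_Ioi (k/b) hα₂).const_mul (Real.exp (c/(τ*a)))))]
    rw [MeasureTheory.integral_const_mul, MeasureTheory.integral_const_mul, myInt hα₁ (k/b), myInt hα₂ (k/b)]
    have hab1 : (0:ℝ) < a + b*τ := by positivity
    have hab2 : (0:ℝ) < b + a*τ := by positivity
    have e1 : Real.exp (-(c/a)) * (Real.exp (-(α₁*(k/b)))/α₁) = Real.exp (-(k/a+k/b)) * (a/(a+b*τ)) := by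
      rw [div_eq_mul_inv (Real.exp (-(α₁*(k/b)))) α₁, ← mul_assoc, ← Real.exp_add]
      congr 1
      · congr 1
        rw [hα₁def, hcdef]; field_simp; ring
      · rw [hα₁def]; field_simp
        ring
    have e2 : Real.exp (c/(τ*a)) * (Real.exp (-(α₂*(k/b)))/α₂) = Real.exp (-(k/a+k/b)) * (τ*a/(b+a*τ)) := by
      rw [div_eq_mul_inv (Real.exp (-(α₂*(k/b)))) α₂, ← mul_assoc, ← Real.exp_add]
      congr 1
      · congr 1
        rw [hα₂def, hcdef]; field_simp; ring
      · rw [hα₂def]; field_simp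
    rw [e1, e2, ← mul_sub, mul_comm]
    congr 1
    field_simp
    ring

/-- CDF of T₂ = max{aX,bY}/(min{aX,bY}+I) for independent Exp(1) X, Y, for 0 ≤ τ < 1. -/
theorem exp_T2_cdf_lt_one
    {Ω : Type*} [MeasurableSpace Ω] (P : Measure Ω) [IsProbabilityMeasure P]
    (X Y : Ω → ℝ) (a b I τ : ℝ)
    (ha : 0 < a) (hb : 0 < b) (hI : 0 ≤ I) (hτ0 : 0 ≤ τ) (hτ1 : τ < 1)
    (hXY : IndepFun X Y P)
    (hX : Measure.map X P = expMeasure 1)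
    (hY : Measure.map Y P = expMeasure 1) :
    (P {ω | max (a * X ω) (b * Y ω) / (min (a * X ω) (b * Y ω) + I) ≤ τ}).toReal =
      1 - a / (a + b * τ) * Real.exp (-(τ * I / a))
        - b / (b + a * τ) * Real.exp (-(τ * I / b))
        + a * b * (1 + τ) * (1 - τ) / ((a + b * τ) * (b + a * τ)) *
            Real.exp (-((1 / a + 1 / b) * (τ * I / (1 - τ)))) := by
  haveI : IsProbabilityMeasure (expMeasure 1) := isProbabilityMeasure_expMeasure one_pos
  -- a.e. measurability
  have hXm : AEMeasurable X P := by
    by_contra h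
    have h2 := Measure.map_of_not_aemeasurable h
    rw [hX] at h2
    have h0 : (expMeasure 1 : Measure ℝ) univ = 0 := by rw [h2]; simp
    rw [measure_univ] at h0
    exact one_ne_zero h0
  have hYm : AEMeasurable Y P := by
    by_contra h
    have h2 := Measure.map_of_not_aemeasurable h
    rw [hY] at h2
    have h0 : (expMeasure 1 : Measure ℝ) univ = 0 := by rw [h2]; simp
    rw [measure_univ] at h0
    exact one_ne_zero h0
  set μ₂ := (expMeasure 1).prod (expMeasure 1) with hμ₂
  have hmap : Measure.map (fun ω => (X ω, Y ω)) P = μ₂ := by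
    rw [hμ₂]
    exact ((ProbabilityTheory.indepFun_iff_map_prod_eq_prod_map_map hXm hYm).1 hXY).trans
      (by rw [hX, hY])
  set c : ℝ := τ * I with hcdef
  have hc : 0 ≤ c := by positivity
  set k : ℝ := τ * I / (1 - τ) with hkdef
  have h1τ : 0 < 1 - τ := by linarith
  have hk : 0 ≤ k := by positivity
  have hkc : k * (1 - τ) = c := by rw [hkdef, hcdef, div_mul_cancel₀ _ h1τ.ne']
  set A : Set (ℝ × ℝ) := {p : ℝ × ℝ | τ * (b * p.2) + c < a * p.1} with hA
  set B : Set (ℝ × ℝ) := {p : ℝ × ℝ | τ * (a * p.1) + c < b * p.2} with hB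
  set T : Set (ℝ × ℝ) :=
    {p : ℝ × ℝ | max (a * p.1) (b * p.2) / (min (a * p.1) (b * p.2) + I) ≤ τ} with hT
  have hAm : MeasurableSet A := measurableSet_lt (by fun_prop) (by fun_prop)
  have hBm : MeasurableSet B := measurableSet_lt (by fun_prop) (by fun_prop)
  have hTm : MeasurableSet T := by
    apply measurableSet_le _ measurable_const
    apply Measurable.div
    · exact ((measurable_fst.const_mul a).max (measurable_snd.const_mul b))
    · exact ((measurable_fst.const_mul a).min (measurable_snd.const_mul b)).add_const I
  -- step 1 : P set = μ₂ T
  have step1 : P {ω | max (a * X ω) (b * Y ω) / (min (a * X ω) (b * Y ω) + I) ≤ τ} = μ₂ T := by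
    rw [← hmap, Measure.map_apply_of_aemeasurable (hXm.prodMk hYm) hTm]
    rfl
  -- a.e. positivity
  have hpos : ∀ᵐ p ∂μ₂, 0 < p.1 ∧ 0 < p.2 := by
    rw [ae_iff]
    have hsub : {p : ℝ × ℝ | ¬(0 < p.1 ∧ 0 < p.2)}
        ⊆ {p : ℝ × ℝ | p.1 ≤ 0} ∪ {p : ℝ × ℝ | p.2 ≤ 0} := by
      intro p hp
      simp only [mem_setOf_eq, not_and_or, not_lt] at hp
      simpa using hp
    have h1 : μ₂ {p : ℝ × ℝ | p.1 ≤ 0} = 0 := by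
      have he : {p : ℝ × ℝ | p.1 ≤ 0} = Iic 0 ×ˢ univ := by ext p; simp
      rw [he, hμ₂, Measure.prod_prod, expNullIic, zero_mul]
    have h2 : μ₂ {p : ℝ × ℝ | p.2 ≤ 0} = 0 := by
      have he : {p : ℝ × ℝ | p.2 ≤ 0} = univ ×ˢ Iic 0 := by ext p; simp
      rw [he, hμ₂, Measure.prod_prod, expNullIic, mul_zero]
    exact measure_mono_null hsub (measure_union_null h1 h2)
  -- step 2 : μ₂ T = μ₂ (A ∪ B)ᶜ
  have step2 : μ₂ T = μ₂ ((A ∪ B)ᶜ) := by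
    apply measure_congr
    apply Filter.eventuallyEq_set.2
    filter_upwards [hpos] with p hp
    obtain ⟨hx, hy⟩ := hp
    have hd : 0 < min (a * p.1) (b * p.2) + I := by
      have : 0 < min (a * p.1) (b * p.2) := lt_min (by positivity) (by positivity)
      linarith
    simp only [hT, hA, hB, mem_setOf_eq, mem_compl_iff, mem_union, not_or, not_lt]
    rw [div_le_iff₀ hd]
    rcases le_total (a * p.1) (b * p.2) with h|h
    · rw [max_eq_right h, min_eq_left h]
      constructor
      · intro h1
        have hmul : 0 ≤ τ * (b * p.2 - a * p.1) := mul_nonneg hτ0 (by linarith)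
        constructor <;> nlinarith
      · rintro ⟨h1, h2⟩; nlinarith
    · rw [max_eq_left h, min_eq_right h]
      constructor
      · intro h1
        have hmul : 0 ≤ τ * (a * p.1 - b * p.2) := mul_nonneg hτ0 (by linarith)
        constructor <;> nlinarith
      · rintro ⟨h1, h2⟩; nlinarith
  -- measures of A, B, A∩B
  have hPA : μ₂ A = ENNReal.ofReal (a / (a + b * τ) * Real.exp (-(τ * I / a))) := PA ha hb hτ0 hc
  have hPB : μ₂ B = ENNReal.ofReal (b / (b + a * τ) * Real.exp (-(τ * I / b))) := by
    have hswap : B = Prod.swap ⁻¹' {p : ℝ × ℝ | τ * (a * p.2) + c < b * p.1} := by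
      ext p; simp [hB, Prod.swap]
    rw [hswap, ← Measure.map_apply measurable_swap (measurableSet_lt (by fun_prop) (by fun_prop)),
      hμ₂, Measure.prod_swap]
    exact PA hb ha hτ0 hc
  have hPAB : μ₂ (A ∩ B) = ENNReal.ofReal (a * b * (1 + τ) * (1 - τ) / ((a + b * τ) * (b + a * τ))
      * Real.exp (-((1 / a + 1 / b) * (τ * I / (1 - τ))))) := by
    have h := PAB (k := k) ha hb hτ0 hτ1 hk
    rw [hkc] at h
    have hseteq : A ∩ B = {p : ℝ × ℝ | τ * (b * p.2) + c < a * p.1 ∧ τ * (a * p.1) + c < b * p.2} := by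
      rw [hA, hB, Set.setOf_and]
    rw [hseteq, h]
    congr 2
    rw [hkdef]
    ring
  -- inclusion-exclusion and conversion to real
  have hunion : μ₂ (A ∪ B) + μ₂ (A ∩ B) = μ₂ A + μ₂ B := measure_union_add_inter A hBm
  have hcompl : μ₂ ((A ∪ B)ᶜ) = 1 - μ₂ (A ∪ B) := by
    rw [measure_compl (hAm.union hBm) (measure_ne_top _ _), measure_univ]
  rw [step1, step2, hcompl]
  have hfin : μ₂ (A ∪ B) ≤ 1 := prob_le_one
  rw [ENNReal.toReal_sub_of_le hfin ENNReal.one_ne_top, ENNReal.toReal_one]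
  have htr : (μ₂ (A ∪ B)).toReal + (μ₂ (A ∩ B)).toReal = (μ₂ A).toReal + (μ₂ B).toReal := by
    rw [← ENNReal.toReal_add (measure_ne_top _ _) (measure_ne_top _ _),
      ← ENNReal.toReal_add (measure_ne_top _ _) (measure_ne_top _ _), hunion]
  rw [hPA, hPB, hPAB] at htr
  rw [ENNReal.toReal_ofReal (by positivity), ENNReal.toReal_ofReal (by positivity),
    ENNReal.toReal_ofReal ?nn] at htr
  · linarith
  · have h1 : 0 ≤ a * b * (1 + τ) * (1 - τ) / ((a + b * τ) * (b + a * τ)) := by positivity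
    positivity
end

section
/- Let X and Y be independent exponential random variables with mean 1, and let a, b > 0, I ≥ 0. For τ ≥ 1, the CDF of T₂ = max{aX, bY}/(min{aX, bY} + I) equals 1 − [a/(a+bτ)]e^{−τI/a} − [b/(b+aτ)]e^{−τI/b}. -/
open MeasureTheory ProbabilityTheory Real Set

namespace ExpT2Aux

instance : IsProbabilityMeasure (expMeasure 1) := isProbabilityMeasure_expMeasure zero_lt_one

lemma expMeasure_one_Iic (x : ℝ) :
    expMeasure 1 (Iic x) = ENNReal.ofReal (if 0 ≤ x then 1 - exp (-x) else 0) := by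
  have hpdf : gammaPDF 1 1 = exponentialPDF 1 := rfl
  rw [expMeasure, gammaMeasure, withDensity_apply _ measurableSet_Iic, hpdf]
  simpa using lintegral_exponentialPDF_eq_antiDeriv (r := 1) zero_lt_one x

lemma expMeasure_one_Iic_zero : expMeasure 1 (Iic 0) = 0 := by
  simp [expMeasure_one_Iic]

lemma expMeasure_one_Ioi {x : ℝ} (hx : 0 ≤ x) :
    expMeasure 1 (Ioi x) = ENNReal.ofReal (exp (-x)) := by
  have h := measure_compl (μ := expMeasure 1) (measurableSet_Iic (a := x)) (measure_ne_top _ _)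
  rw [compl_Iic] at h
  rw [h, measure_univ, expMeasure_one_Iic, if_pos hx, ← ENNReal.ofReal_one,
    ← ENNReal.ofReal_sub _ (sub_nonneg.mpr (Real.exp_le_one_iff.mpr (by linarith)))]
  norm_num

lemma ae_pos_expMeasure : ∀ᵐ x ∂(expMeasure 1), 0 < x := by
  rw [ae_iff]
  have : {x : ℝ | ¬ 0 < x} = Iic 0 := by ext x; simp
  rw [this, expMeasure_one_Iic_zero]

lemma real_int {c d : ℝ} (hc : 0 < c) :
    ∫ y in Ioi (0:ℝ), exp (-((1 + c) * y + d)) = exp (-d) / (1 + c) := by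
  have h1c : 0 < 1 + c := by linarith
  have : (fun y : ℝ => exp (-((1 + c) * y + d)))
      = fun y : ℝ => exp (-d) * exp (-((1 + c) * y)) := by
    funext y; rw [← Real.exp_add]; ring_nf
  rw [this, MeasureTheory.integral_const_mul]
  have := integral_comp_mul_left_Ioi (fun x : ℝ => exp (-x)) 0 h1c
  simp only [mul_zero] at this
  rw [this, integral_exp_neg_Ioi, smul_eq_mul]
  rw [neg_zero, Real.exp_zero]
  field_simp

lemma integrable_exp_affine {c d : ℝ} (hc : 0 < c) :
    IntegrableOn (fun y : ℝ => exp (-((1 + c) * y + d))) (Ioi 0) := by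
  have h1c : 0 < 1 + c := by linarith
  have : (fun y : ℝ => exp (-((1 + c) * y + d)))
      = fun y : ℝ => exp (-d) * exp (-(1 + c) * y) := by
    funext y; rw [← Real.exp_add]; ring_nf
  rw [this]
  exact (exp_neg_integrableOn_Ioi 0 h1c).const_mul _

lemma lintegral_exp_affine {c d : ℝ} (hc : 0 < c) :
    ∫⁻ y, ENNReal.ofReal (exp (-(c * y + d))) ∂(expMeasure 1)
      = ENNReal.ofReal (exp (-d) / (1 + c)) := by
  have hpdf : gammaPDF 1 1 = exponentialPDF 1 := rfl
  have hmeas : Measurable fun y : ℝ => ENNReal.ofReal (exp (-(c * y + d))) := by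
    exact (((measurable_id.const_mul c).add_const d).neg.exp).ennreal_ofReal
  have hm : Measurable (exponentialPDF 1) := (measurable_exponentialPDFReal 1).ennreal_ofReal
  rw [expMeasure, gammaMeasure, hpdf,
    lintegral_withDensity_eq_lintegral_mul _ hm hmeas]
  have hsplit : ∀ y : ℝ, (exponentialPDF 1 * fun y => ENNReal.ofReal (exp (-(c * y + d)))) y
      = (Ici (0:ℝ)).indicator (fun y => ENNReal.ofReal (exp (-((1 + c) * y + d)))) y := by
    intro y
    simp only [Pi.mul_apply, exponentialPDF_eq, indicator, mem_Ici]
    split_ifs with h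
    · have he : 1 * rexp (-(1 * y)) * rexp (-(c * y + d)) = rexp (-((1 + c) * y + d)) := by
        rw [one_mul, one_mul, ← Real.exp_add]; ring_nf
      rw [← ENNReal.ofReal_mul (by positivity), he]
    · simp
  rw [lintegral_congr hsplit, lintegral_indicator measurableSet_Ici _,
    setLIntegral_congr (Filter.EventuallyEq.symm Ioi_ae_eq_Ici),
    ← ofReal_integral_eq_lintegral_ofReal (integrable_exp_affine hc)
      (Filter.Eventually.of_forall fun y => (Real.exp_pos _).le),
    real_int hc]

end ExpT2Aux

open ExpT2Aux

/-- CDF of T₂ = max{aX,bY}/(min{aX,bY}+I) for independent Exp(1) X, Y, for τ ≥ 1. -/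
theorem exp_T2_cdf_ge_one
    {Ω : Type*} [MeasurableSpace Ω] (P : Measure Ω) [IsProbabilityMeasure P]
    (X Y : Ω → ℝ) (a b I τ : ℝ)
    (ha : 0 < a) (hb : 0 < b) (hI : 0 ≤ I) (hτ : 1 ≤ τ)
    (hXY : IndepFun X Y P)
    (hX : Measure.map X P = expMeasure 1)
    (hY : Measure.map Y P = expMeasure 1) :
    (P {ω | max (a * X ω) (b * Y ω) / (min (a * X ω) (b * Y ω) + I) ≤ τ}).toReal =
      1 - a / (a + b * τ) * Real.exp (-(τ * I / a))
        - b / (b + a * τ) * Real.exp (-(τ * I / b)) := by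
  classical
  have hτ0 : (0:ℝ) < τ := lt_of_lt_of_le one_pos hτ
  have hXm : AEMeasurable X P := by
    by_contra h
    rw [Measure.map_of_not_aemeasurable h] at hX
    have h1 : (expMeasure 1) Set.univ = 1 := measure_univ
    rw [← hX] at h1; simp at h1
  have hYm : AEMeasurable Y P := by
    by_contra h
    rw [Measure.map_of_not_aemeasurable h] at hY
    have h1 : (expMeasure 1) Set.univ = 1 := measure_univ
    rw [← hY] at h1; simp at h1
  have hmap : Measure.map (fun ω => (X ω, Y ω)) P = (expMeasure 1).prod (expMeasure 1) := by
    have h := (ProbabilityTheory.indepFun_iff_map_prod_eq_prod_map_map hXm hYm).mp hXY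
    rw [hX, hY] at h
    exact h
  set ν : Measure (ℝ × ℝ) := (expMeasure 1).prod (expMeasure 1) with hνdef
  haveI : IsProbabilityMeasure ν := by rw [hνdef]; infer_instance
  -- the sets
  have hmS : MeasurableSet {p : ℝ × ℝ |
      max (a * p.1) (b * p.2) / (min (a * p.1) (b * p.2) + I) ≤ τ} := by
    apply measurableSet_le _ measurable_const
    exact ((measurable_fst.const_mul a).max (measurable_snd.const_mul b)).div
      (((measurable_fst.const_mul a).min (measurable_snd.const_mul b)).add_const I)
  have hmA : MeasurableSet {p : ℝ × ℝ | τ * (b * p.2 + I) < a * p.1} :=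
    measurableSet_lt (((measurable_snd.const_mul b).add_const I).const_mul τ)
      (measurable_fst.const_mul a)
  have hmB : MeasurableSet {p : ℝ × ℝ | τ * (a * p.1 + I) < b * p.2} :=
    measurableSet_lt (((measurable_fst.const_mul a).add_const I).const_mul τ)
      (measurable_snd.const_mul b)
  have hmG : MeasurableSet {p : ℝ × ℝ |
      a * p.1 ≤ τ * (b * p.2 + I) ∧ b * p.2 ≤ τ * (a * p.1 + I)} :=
    (measurableSet_le (measurable_fst.const_mul a)
        (((measurable_snd.const_mul b).add_const I).const_mul τ)).inter
      (measurableSet_le (measurable_snd.const_mul b)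
        (((measurable_fst.const_mul a).add_const I).const_mul τ))
  -- transfer to the product measure
  have hPS : P {ω | max (a * X ω) (b * Y ω) / (min (a * X ω) (b * Y ω) + I) ≤ τ}
      = ν {p : ℝ × ℝ | max (a * p.1) (b * p.2) / (min (a * p.1) (b * p.2) + I) ≤ τ} := by
    rw [← hmap, Measure.map_apply_of_aemeasurable (hXm.prodMk hYm) hmS]
    rfl
  -- a.e. positivity
  have hae : ∀ᵐ p ∂ν, 0 < p.1 ∧ 0 < p.2 := by
    have e1 : ∀ᵐ p ∂ν, 0 < p.1 := by
      rw [ae_iff]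
      have : {p : ℝ × ℝ | ¬ 0 < p.1} = (Iic 0) ×ˢ univ := by
        ext p; simp [Set.mem_prod]
      rw [this, hνdef, Measure.prod_prod, expMeasure_one_Iic_zero, zero_mul]
    have e2 : ∀ᵐ p ∂ν, 0 < p.2 := by
      rw [ae_iff]
      have : {p : ℝ × ℝ | ¬ 0 < p.2} = univ ×ˢ (Iic 0) := by
        ext p; simp [Set.mem_prod]
      rw [this, hνdef, Measure.prod_prod, expMeasure_one_Iic_zero, mul_zero]
    exact e1.and e2
  -- the event equals G a.e.
  have hSG : ({p : ℝ × ℝ | max (a * p.1) (b * p.2) / (min (a * p.1) (b * p.2) + I) ≤ τ} : Set (ℝ × ℝ))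
      =ᵐ[ν] {p : ℝ × ℝ | a * p.1 ≤ τ * (b * p.2 + I) ∧ b * p.2 ≤ τ * (a * p.1 + I)} := by
    rw [Filter.eventuallyEq_set]
    filter_upwards [hae] with p hp
    obtain ⟨hx, hy⟩ := hp
    have hax : 0 < a * p.1 := mul_pos ha hx
    have hby : 0 < b * p.2 := mul_pos hb hy
    have hmin : 0 < min (a * p.1) (b * p.2) + I :=
      add_pos_of_pos_of_nonneg (lt_min hax hby) hI
    show max (a * p.1) (b * p.2) / (min (a * p.1) (b * p.2) + I) ≤ τ ↔
      (a * p.1 ≤ τ * (b * p.2 + I) ∧ b * p.2 ≤ τ * (a * p.1 + I))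
    rw [div_le_iff₀ hmin]
    constructor
    · intro h
      rcases le_total (a * p.1) (b * p.2) with hle | hle
      · rw [max_eq_right hle, min_eq_left hle] at h
        refine ⟨?_, h⟩
        nlinarith
      · rw [max_eq_left hle, min_eq_right hle] at h
        refine ⟨h, ?_⟩
        nlinarith
    · rintro ⟨h1, h2⟩
      rcases le_total (a * p.1) (b * p.2) with hle | hle
      · rw [max_eq_right hle, min_eq_left hle]; linarith
      · rw [max_eq_left hle, min_eq_right hle]; linarith
  -- complement decomposition
  have hGc : ({p : ℝ × ℝ | a * p.1 ≤ τ * (b * p.2 + I) ∧ b * p.2 ≤ τ * (a * p.1 + I)} : Set (ℝ × ℝ))ᶜ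
      = {p : ℝ × ℝ | τ * (b * p.2 + I) < a * p.1} ∪ {p : ℝ × ℝ | τ * (a * p.1 + I) < b * p.2} := by
    ext p
    rw [mem_compl_iff, mem_union]
    simp only [mem_setOf_eq]
    rw [not_and_or, not_le, not_le]
  have hABnull : ν ({p : ℝ × ℝ | τ * (b * p.2 + I) < a * p.1}
      ∩ {p : ℝ × ℝ | τ * (a * p.1 + I) < b * p.2}) = 0 := by
    have hN : ν ((Iic (0:ℝ) ×ˢ (univ : Set ℝ)) ∪ ((univ : Set ℝ) ×ˢ Iic (0:ℝ))) = 0 := by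
      apply measure_union_null
      · rw [hνdef, Measure.prod_prod, expMeasure_one_Iic_zero, zero_mul]
      · rw [hνdef, Measure.prod_prod, expMeasure_one_Iic_zero, mul_zero]
    refine measure_mono_null ?_ hN
    rintro ⟨x, y⟩ ⟨h1, h2⟩
    simp only [mem_setOf_eq] at h1 h2
    by_contra hc
    simp only [mem_union, Set.mem_prod, mem_Iic, mem_univ, and_true, true_and, not_or,
      not_le] at hc
    obtain ⟨hx, hy⟩ := hc
    nlinarith [mul_pos ha hx, mul_pos hb hy,
      mul_nonneg (sub_nonneg.mpr hτ) (mul_pos hb hy).le,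
      mul_nonneg (sub_nonneg.mpr hτ) (mul_pos ha hx).le,
      mul_nonneg hτ0.le hI]
  have hunion : ν ({p : ℝ × ℝ | τ * (b * p.2 + I) < a * p.1}
        ∪ {p : ℝ × ℝ | τ * (a * p.1 + I) < b * p.2})
      = ν {p : ℝ × ℝ | τ * (b * p.2 + I) < a * p.1}
        + ν {p : ℝ × ℝ | τ * (a * p.1 + I) < b * p.2} := by
    have h := measure_union_add_inter (μ := ν)
      {p : ℝ × ℝ | τ * (b * p.2 + I) < a * p.1} hmB
    rw [hABnull, add_zero] at h
    exact h
  -- value of the measure of A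
  have hA_val : ν {p : ℝ × ℝ | τ * (b * p.2 + I) < a * p.1}
      = ENNReal.ofReal (a / (a + b * τ) * exp (-(τ * I / a))) := by
    rw [hνdef, Measure.prod_apply_symm hmA]
    have hsec : ∀ y : ℝ, ((fun x => (x, y)) ⁻¹' {p : ℝ × ℝ | τ * (b * p.2 + I) < a * p.1})
        = Ioi (τ * (b * y + I) / a) := by
      intro y; ext x
      simp only [mem_preimage, mem_setOf_eq, mem_Ioi]
      rw [div_lt_iff₀ ha]
      constructor <;> intro h <;> nlinarith
    calc ∫⁻ y, (expMeasure 1) ((fun x => (x, y)) ⁻¹' {p : ℝ × ℝ | τ * (b * p.2 + I) < a * p.1})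
          ∂(expMeasure 1)
        = ∫⁻ y, ENNReal.ofReal (exp (-((τ * b / a) * y + τ * I / a))) ∂(expMeasure 1) := by
          apply lintegral_congr_ae
          filter_upwards [ae_pos_expMeasure] with y hy
          have harg : 0 ≤ τ * (b * y + I) / a := by
            apply div_nonneg _ ha.le
            apply mul_nonneg hτ0.le
            nlinarith [mul_pos hb hy]
          rw [hsec y, expMeasure_one_Ioi harg]
          congr 1
          rw [show τ * (b * y + I) / a = τ * b / a * y + τ * I / a by field_simp]
      _ = ENNReal.ofReal (exp (-(τ * I / a)) / (1 + τ * b / a)) :=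
          lintegral_exp_affine (div_pos (mul_pos hτ0 hb) ha)
      _ = ENNReal.ofReal (a / (a + b * τ) * exp (-(τ * I / a))) := by
          congr 1
          have h1 : a + b * τ ≠ 0 := by nlinarith [mul_pos hb hτ0]
          field_simp
  -- value of the measure of B
  have hB_val : ν {p : ℝ × ℝ | τ * (a * p.1 + I) < b * p.2}
      = ENNReal.ofReal (b / (b + a * τ) * exp (-(τ * I / b))) := by
    rw [hνdef, Measure.prod_apply hmB]
    have hsec : ∀ x : ℝ, (Prod.mk x ⁻¹' {p : ℝ × ℝ | τ * (a * p.1 + I) < b * p.2})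
        = Ioi (τ * (a * x + I) / b) := by
      intro x; ext y
      simp only [mem_preimage, mem_setOf_eq, mem_Ioi]
      rw [div_lt_iff₀ hb]
      constructor <;> intro h <;> nlinarith
    calc ∫⁻ x, (expMeasure 1) (Prod.mk x ⁻¹' {p : ℝ × ℝ | τ * (a * p.1 + I) < b * p.2})
          ∂(expMeasure 1)
        = ∫⁻ x, ENNReal.ofReal (exp (-((τ * a / b) * x + τ * I / b))) ∂(expMeasure 1) := by
          apply lintegral_congr_ae
          filter_upwards [ae_pos_expMeasure] with x hx
          have harg : 0 ≤ τ * (a * x + I) / b := by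
            apply div_nonneg _ hb.le
            apply mul_nonneg hτ0.le
            nlinarith [mul_pos ha hx]
          rw [hsec x, expMeasure_one_Ioi harg]
          congr 1
          rw [show τ * (a * x + I) / b = τ * a / b * x + τ * I / b by field_simp]
      _ = ENNReal.ofReal (exp (-(τ * I / b)) / (1 + τ * a / b)) :=
          lintegral_exp_affine (div_pos (mul_pos hτ0 ha) hb)
      _ = ENNReal.ofReal (b / (b + a * τ) * exp (-(τ * I / b))) := by
          congr 1
          have h1 : b + a * τ ≠ 0 := by nlinarith [mul_pos ha hτ0]
          field_simp
  -- assemble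
  have hcompl : ν {p : ℝ × ℝ | a * p.1 ≤ τ * (b * p.2 + I) ∧ b * p.2 ≤ τ * (a * p.1 + I)}
      = 1 - (ν {p : ℝ × ℝ | τ * (b * p.2 + I) < a * p.1}
          + ν {p : ℝ × ℝ | τ * (a * p.1 + I) < b * p.2}) := by
    have h := prob_compl_eq_one_sub (μ := ν) hmG.compl
    rw [compl_compl] at h
    rw [h, hGc, hunion]
  have hle1 : ν {p : ℝ × ℝ | τ * (b * p.2 + I) < a * p.1}
      + ν {p : ℝ × ℝ | τ * (a * p.1 + I) < b * p.2} ≤ 1 := by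
    rw [← hunion]; exact prob_le_one
  have hrA : (0:ℝ) ≤ a / (a + b * τ) * exp (-(τ * I / a)) := by
    apply mul_nonneg _ (Real.exp_pos _).le
    apply div_nonneg ha.le
    nlinarith [mul_pos hb hτ0]
  have hrB : (0:ℝ) ≤ b / (b + a * τ) * exp (-(τ * I / b)) := by
    apply mul_nonneg _ (Real.exp_pos _).le
    apply div_nonneg hb.le
    nlinarith [mul_pos ha hτ0]
  rw [hPS, measure_congr hSG, hcompl,
    ENNReal.toReal_sub_of_le hle1 ENNReal.one_ne_top, hA_val, hB_val,
    ENNReal.toReal_add ENNReal.ofReal_ne_top ENNReal.ofReal_ne_top,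
    ENNReal.toReal_ofReal hrA, ENNReal.toReal_ofReal hrB, ENNReal.toReal_one]
  ring
end

section
/- For every positive integer m and all a, b > 0: Σ_{i=0}^{m−1} C(m+i−1, i) · (aᵐbⁱ + aⁱbᵐ)/(a+b)^{m+i} = 1. -/
open Finset

lemma choose_two_mul_aux (n : ℕ) : (2 * n + 2).choose (n + 1) = 2 * ((2 * n + 1).choose (n + 1)) := by
  have h1 : (2 * n + 2).choose (n + 1) = (2 * n + 1).choose n + (2 * n + 1).choose (n + 1) := by
    rw [show 2 * n + 2 = (2 * n + 1) + 1 by ring]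
    exact Nat.choose_succ_succ _ _
  have h2 := Nat.choose_symm (n := 2 * n + 1) (k := n + 1) (by omega)
  rw [show 2 * n + 1 - (n + 1) = n by omega] at h2
  omega

lemma step_aux (n : ℕ) (y : ℝ) :
    (1 - y) * ∑ i ∈ range (n + 2), ((n + 1 + i).choose i : ℝ) * y ^ i
      = (∑ i ∈ range (n + 1), ((n + i).choose i : ℝ) * y ^ i)
        + ((2 * n + 1).choose (n + 1) : ℝ) * y ^ (n + 1) * (1 - 2 * y) := by
  have hterm : ∀ j ∈ range (n + 1),
      ((n + 1 + (j + 1)).choose (j + 1) : ℝ) * y ^ (j + 1)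
        = ((n + 1 + j).choose j : ℝ) * y ^ j * y
          + ((n + (j + 1)).choose (j + 1) : ℝ) * y ^ (j + 1) := by
    intro j _
    have : (n + 1 + (j + 1)).choose (j + 1)
        = (n + 1 + j).choose j + (n + (j + 1)).choose (j + 1) := by
      rw [show n + 1 + (j + 1) = (n + 1 + j) + 1 by ring]
      rw [Nat.choose_succ_succ]
      congr 2
      omega
    rw [this]
    push_cast
    ring
  have split1 : ∑ i ∈ range (n + 2), ((n + 1 + i).choose i : ℝ) * y ^ i
      = (∑ j ∈ range (n + 1), ((n + 1 + j).choose j : ℝ) * y ^ j * y)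
        + (∑ j ∈ range (n + 1), ((n + (j + 1)).choose (j + 1) : ℝ) * y ^ (j + 1)) + 1 := by
    rw [Finset.sum_range_succ' (fun i => ((n + 1 + i).choose i : ℝ) * y ^ i) (n + 1)]
    rw [Finset.sum_congr rfl hterm, Finset.sum_add_distrib]
    norm_num
  have e1 : ∑ j ∈ range (n + 1), ((n + 1 + j).choose j : ℝ) * y ^ j * y
      = y * ((∑ i ∈ range (n + 2), ((n + 1 + i).choose i : ℝ) * y ^ i)
          - ((2 * n + 2).choose (n + 1) : ℝ) * y ^ (n + 1)) := by
    rw [Finset.sum_range_succ (fun i => ((n + 1 + i).choose i : ℝ) * y ^ i) (n + 1)]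
    rw [← Finset.sum_mul, show n + 1 + (n + 1) = 2 * n + 2 by ring]
    ring
  have e2 : ∑ j ∈ range (n + 1), ((n + (j + 1)).choose (j + 1) : ℝ) * y ^ (j + 1)
      = (∑ i ∈ range (n + 1), ((n + i).choose i : ℝ) * y ^ i)
        + (((2 * n + 1).choose (n + 1) : ℝ) * y ^ (n + 1) - 1) := by
    have h := Finset.sum_range_succ' (fun i => ((n + i).choose i : ℝ) * y ^ i) (n + 1)
    rw [Finset.sum_range_succ (fun i => ((n + i).choose i : ℝ) * y ^ i) (n + 1)] at h
    simp only [Nat.add_zero, Nat.choose_zero_right, Nat.cast_one, pow_zero, mul_one] at h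
    rw [show n + (n + 1) = 2 * n + 1 by ring] at h
    linarith [h]
  have h2 : ((2 * n + 2).choose (n + 1) : ℝ) = 2 * ((2 * n + 1).choose (n + 1) : ℝ) := by
    exact_mod_cast congrArg (Nat.cast (R := ℝ)) (choose_two_mul_aux n)
  linear_combination split1 + e1 + e2 - y * y ^ (n + 1) * h2

lemma combined_aux (n : ℕ) (x y : ℝ) (h : x + y = 1) :
    ∑ i ∈ range (n + 1), ((n + i).choose i : ℝ) * (x ^ (n + 1) * y ^ i + x ^ i * y ^ (n + 1))
      = 1 := by
  have hx : x = 1 - y := by linarith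
  subst hx
  clear h
  induction n with
  | zero => simp
  | succ k ih =>
    have d2 : ∑ i ∈ range (k + 2), ((k + 1 + i).choose i : ℝ)
          * ((1 - y) ^ (k + 2) * y ^ i + (1 - y) ^ i * y ^ (k + 2))
        = (1 - y) ^ (k + 2) * (∑ i ∈ range (k + 2), ((k + 1 + i).choose i : ℝ) * y ^ i)
          + y ^ (k + 2) * (∑ i ∈ range (k + 2), ((k + 1 + i).choose i : ℝ) * (1 - y) ^ i) := by
      rw [Finset.mul_sum, Finset.mul_sum, ← Finset.sum_add_distrib]
      exact Finset.sum_congr rfl fun i _ => by ring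
    have d1 : ∑ i ∈ range (k + 1), ((k + i).choose i : ℝ)
          * ((1 - y) ^ (k + 1) * y ^ i + (1 - y) ^ i * y ^ (k + 1))
        = (1 - y) ^ (k + 1) * (∑ i ∈ range (k + 1), ((k + i).choose i : ℝ) * y ^ i)
          + y ^ (k + 1) * (∑ i ∈ range (k + 1), ((k + i).choose i : ℝ) * (1 - y) ^ i) := by
      rw [Finset.mul_sum, Finset.mul_sum, ← Finset.sum_add_distrib]
      exact Finset.sum_congr rfl fun i _ => by ring
    have s1 := step_aux k y
    have s2 := step_aux k (1 - y)
    linear_combination d2 + (1 - y) ^ (k + 1) * s1 + y ^ (k + 1) * s2 - d1 + ih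

/-- Σ_{i=0}^{m−1} C(m+i−1, i)·(aᵐbⁱ + aⁱbᵐ)/(a+b)^{m+i} = 1. -/
theorem sum_choose_ratio_eq_one (m : ℕ) (hm : 1 ≤ m) (a b : ℝ) (ha : 0 < a) (hb : 0 < b) :
    ∑ i ∈ Finset.range m,
      ((m + i - 1).choose i : ℝ) * (a ^ m * b ^ i + a ^ i * b ^ m) / (a + b) ^ (m + i)
      = 1 := by
  obtain ⟨n, rfl⟩ : ∃ n, m = n + 1 := ⟨m - 1, by omega⟩
  have hs : (0:ℝ) < a + b := by linarith
  rw [← combined_aux n (a / (a + b)) (b / (a + b)) (by field_simp)]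
  apply Finset.sum_congr rfl
  intro i hi
  have h1 : n + 1 + i - 1 = n + i := by omega
  rw [h1, div_pow, div_pow, div_pow, div_pow, pow_add]
  field_simp
  ring
end
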